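/- arXiv:1905.11981 — 2 statements merged into one kernel-verified Lean document; each statement's English description precedes it below -/
import Mathlib

section
/- Let k ≥ 2 be an integer. For any words u, v, w ∈ Σ_k^* with [u]_k ≠ 0 and [w]_k ≠ 0, there exists D ∈ ℕ such that the following is true: for any prime p there exists Q ∈ ℕ such that for every l ∈ ℕ divisible by Q, the p-adic valuation satisfies ν_p([w v^l u]_k) ≤ ν_p(D). -/
open scoped BigOperators

namespace MultAuto

/-- Base-`k` value of a word over `Σ_k` (most significant digit first); `[ε]_k = 0`. -/
def valk (k : ℕ) (u : List ℕ) : ℕ := u.foldl (fun acc d => k * acc + d) 0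

/-- `u` is a word over the alphabet `Σ_k = {0,…,k-1}`. -/
def IsWord (k : ℕ) (u : List ℕ) : Prop := ∀ d ∈ u, d < k

/-- `u` has no leading zeros (the empty word qualifies). -/
def NoLeadZero : List ℕ → Prop
  | [] => True
  | d :: _ => d ≠ 0

/-- `wpow v l` is the `l`-fold concatenation `v^l`. -/
def wpow (v : List ℕ) (l : ℕ) : List ℕ := (List.replicate l v).flatten

/-- Transition function of a word: `δ_{uv} = δ_u ∘ δ_v`. -/
def deltaW {S : Type*} (δ : ℕ → S → S) : List ℕ → S → S
  | [] => id
  | d :: t => δ d ∘ deltaW δ t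

/-- `a : ℕ → ℂ` is a `k`-automatic sequence. -/
def IsAutomatic (k : ℕ) (a : ℕ → ℂ) : Prop :=
  ∃ (S : Type) (_ : Fintype S) (s₀ : S) (δ : ℕ → S → S) (τ : S → ℂ),
    ∀ u : List ℕ, IsWord k u → NoLeadZero u → a (valk k u) = τ (deltaW δ u s₀)

/-- `a` is multiplicative: `a (m n) = a m * a n` for coprime positive `m, n`. -/
def IsMult (a : ℕ → ℂ) : Prop :=
  ∀ m n : ℕ, 0 < m → 0 < n → Nat.Coprime m n → a (m * n) = a m * a n

/-- The word `u_r v_r^{l_r} u_{r-1} ⋯ u_1 v_1^{l_1} u_0`. -/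
def aridWord (u v : ℕ → List ℕ) (l : ℕ → ℕ) : ℕ → List ℕ
  | 0 => u 0
  | r + 1 => u (r + 1) ++ wpow (v (r + 1)) (l (r + 1)) ++ aridWord u v l r

/-- `A` is a basic arid set of rank ≤ r in base k. -/
def BasicArid (k r : ℕ) (A : Set ℕ) : Prop :=
  ∃ u v : ℕ → List ℕ, (∀ i, IsWord k (u i)) ∧ (∀ i, IsWord k (v i)) ∧
    A = {n | ∃ l : ℕ → ℕ, n = valk k (aridWord u v l r)}

/-- `A` is an arid set of rank ≤ r: a finite union of basic arid sets of rank ≤ r. -/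
def AridOfRank (k r : ℕ) (A : Set ℕ) : Prop :=
  ∃ (m : ℕ) (B : Fin m → Set ℕ), (∀ j, BasicArid k r (B j)) ∧ A = ⋃ j, B j

/-- `A` is arid (in base `k`). -/
def Arid (k : ℕ) (A : Set ℕ) : Prop := ∃ r, AridOfRank k r A

/-- `χ : ℕ → ℂ` is a Dirichlet character of modulus `m`: completely multiplicative,
`m`-periodic, and nonvanishing exactly at integers coprime to `m`. -/
def IsDirichletLike (m : ℕ) (χ : ℕ → ℂ) : Prop :=
  0 < m ∧ (∀ a b : ℕ, 0 < a → 0 < b → χ (a * b) = χ a * χ b) ∧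
  (∀ n : ℕ, 0 < n → χ (n + m) = χ n) ∧
  (∀ n : ℕ, 0 < n → (χ n ≠ 0 ↔ Nat.Coprime n m))

/-- `(n)_k^l`: the last `l` base-`k` digits of `n`, padded with leading zeros,
most significant digit first. -/
def padk (k l n : ℕ) : List ℕ := (List.range l).reverse.map fun i => n / k ^ i % k

/-- The equivalence `n₁ ∼ n₂` on `ℕ` induced by the transition maps `δ`. -/
def EqvN (k : ℕ) {S : Type*} (δ : ℕ → S → S) (n₁ n₂ : ℕ) : Prop :=
  ∃ l₀ : ℕ, ∀ l ≥ l₀, deltaW δ (padk k l n₁) = deltaW δ (padk k l n₂)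

/-- `E ⊆ ℕ` has upper Banach density zero. -/
def UpperBanachDensityZero (E : Set ℕ) : Prop :=
  ∀ ε : ℝ, 0 < ε → ∃ N₀ : ℕ, ∀ N ≥ N₀, ∀ M : ℕ,
    ((E ∩ Set.Ico M (M + N)).ncard : ℝ) ≤ ε * N

lemma valk_foldl (k a : ℕ) (u : List ℕ) :
    u.foldl (fun acc d => k * acc + d) a = a * k ^ u.length + valk k u := by
  induction u generalizing a with
  | nil => simp [valk]
  | cons d t ih =>
    have h0 : valk k (d :: t) = d * k ^ t.length + valk k t := by
      simpa [valk] using ih (k * 0 + d)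
    simp only [List.foldl_cons, List.length_cons, h0, ih (k * a + d)]
    ring

lemma valk_append (k : ℕ) (x y : List ℕ) :
    valk k (x ++ y) = valk k x * k ^ y.length + valk k y := by
  unfold valk
  rw [List.foldl_append]
  exact valk_foldl k _ y

lemma valk_lt (k : ℕ) (u : List ℕ) (hu : IsWord k u) :
    valk k u < k ^ u.length := by
  induction u with
  | nil => simp [valk]
  | cons d t ih =>
    have hd : d < k := hu d (by simp)
    have ht : valk k t < k ^ t.length := ih (fun x hx => hu x (by simp [hx]))
    have h0 : valk k (d :: t) = d * k ^ t.length + valk k t := by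
      simpa [valk] using valk_foldl k (k * 0 + d) t
    calc valk k (d :: t) < d * k ^ t.length + k ^ t.length := by omega
      _ = (d + 1) * k ^ t.length := by ring
      _ ≤ k * k ^ t.length := Nat.mul_le_mul_right _ hd
      _ = k ^ (d :: t).length := by rw [List.length_cons, pow_succ, mul_comm]

lemma wpow_length (v : List ℕ) (l : ℕ) : (wpow v l).length = l * v.length := by
  simp [wpow]

lemma wpow_succ (v : List ℕ) (l : ℕ) : wpow v (l + 1) = v ++ wpow v l := by
  simp [wpow, List.replicate_succ]

lemma padic_le_of_dvd {p a D : ℕ} (hp : p.Prime) (hD : D ≠ 0) (h : a ∣ D) :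
    padicValNat p a ≤ padicValNat p D := by
  haveI := Fact.mk hp
  have h1 : p ^ padicValNat p a ∣ D := pow_padicValNat_dvd.trans h
  exact (padicValNat_dvd_iff_le hD).mp h1

lemma padic_le_of_not_dvd {p n t : ℕ} (h : ¬ p ^ (t + 1) ∣ n) :
    padicValNat p n ≤ t := by
  by_contra hlt
  exact h ((pow_dvd_pow p (by omega)).trans pow_padicValNat_dvd)


/-- uniform bound on `ν_p([w v^l u]_k)` along multiples of a suitable `Q`. -/
theorem stmt8 (k : ℕ) (hk : 2 ≤ k) (u v w : List ℕ)
    (hu : IsWord k u) (hv : IsWord k v) (hw : IsWord k w)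
    (hu0 : valk k u ≠ 0) (hw0 : valk k w ≠ 0) :
    ∃ D : ℕ, 0 < D ∧ ∀ p : ℕ, p.Prime → ∃ Q : ℕ, 0 < Q ∧
      ∀ l : ℕ, 0 < l → Q ∣ l →
        padicValNat p (valk k (w ++ wpow v l ++ u)) ≤ padicValNat p D := by
  have hk0 : 0 < k := by omega
  by_cases hvnil : v = []
  · subst hvnil
    refine ⟨valk k (w ++ u), ?_, fun p hp => ⟨1, one_pos, fun l hl hQ => ?_⟩⟩
    · have h := valk_append k w u
      have : valk k (w ++ u) ≠ 0 := by rw [h]; intro h0; omega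
      omega
    · have hwl : wpow ([] : List ℕ) l = [] := by simp [wpow]
      rw [hwl, List.append_nil]
  · have hm : 0 < v.length := List.length_pos_iff.mpr hvnil
    set m := v.length with hmdef
    have hb2 : 2 ≤ k ^ m := le_trans hk (Nat.le_self_pow hm.ne' k)
    have hbk : 1 ≤ k ^ m := by omega
    set nu := u.length with hnudef
    set c : ℤ := (k : ℤ) ^ m - 1 with hc
    set A : ℤ := ((valk k w : ℤ) * c + (valk k v : ℤ)) * (k : ℤ) ^ nu with hA
    set B : ℤ := (valk k u : ℤ) * c - (valk k v : ℤ) * (k : ℤ) ^ nu with hB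
    have hccast : ((k ^ m - 1 : ℕ) : ℤ) = c := by
      rw [Nat.cast_sub hbk]; push_cast; rw [hc]
    -- geometric sum
    have geo : ∀ l : ℕ, c * (valk k (wpow v l) : ℤ) =
        (valk k v : ℤ) * (((k : ℤ) ^ m) ^ l - 1) := by
      intro l
      induction l with
      | zero => simp [wpow, valk]
      | succ n ih =>
        have h := wpow_succ v n
        have h' : ((valk k (wpow v (n + 1)) : ℕ) : ℤ) =
            (valk k v : ℤ) * ((k : ℤ) ^ m) ^ n + (valk k (wpow v n) : ℤ) := by
          rw [h, valk_append, wpow_length]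
          push_cast
          rw [mul_comm n m, pow_mul]
        linear_combination c * h' + ih
    -- key identity
    have hkey : ∀ l : ℕ, c * (valk k (w ++ wpow v l ++ u) : ℤ) =
        A * ((k : ℤ) ^ m) ^ l + B := by
      intro l
      have h1 : valk k (w ++ wpow v l ++ u) =
          (valk k w * k ^ (l * m) + valk k (wpow v l)) * k ^ nu + valk k u := by
        rw [valk_append, valk_append, wpow_length]
      have h1' : (valk k (w ++ wpow v l ++ u) : ℤ) =
          ((valk k w : ℤ) * ((k : ℤ) ^ m) ^ l + (valk k (wpow v l) : ℤ)) * (k : ℤ) ^ nu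
            + (valk k u : ℤ) := by
        rw [h1]
        push_cast
        rw [mul_comm l m, pow_mul]
      linear_combination c * h1' + (k : ℤ) ^ nu * geo l
    have hN00 : valk k (w ++ wpow v 0 ++ u) = valk k (w ++ u) := by
      simp [wpow]
    have hkey0 : c * (valk k (w ++ u) : ℤ) = A + B := by
      have := hkey 0
      rw [hN00] at this
      simpa using this
    have hN0ne : valk k (w ++ u) ≠ 0 := by
      rw [valk_append]; intro h0; omega
    have hNlne : ∀ l : ℕ, valk k (w ++ wpow v l ++ u) ≠ 0 := by
      intro l
      rw [valk_append]; intro h0; omega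
    -- B ≠ 0
    have hBne : B ≠ 0 := by
      intro h0
      have hUc : valk k u * (k ^ m - 1) = valk k v * k ^ nu := by
        have h1 : (valk k u : ℤ) * c = (valk k v : ℤ) * (k : ℤ) ^ nu := by
          rw [hB] at h0; linarith
        have h2 : ((valk k u * (k ^ m - 1) : ℕ) : ℤ) = ((valk k v * k ^ nu : ℕ) : ℤ) := by
          push_cast [hccast]
          push_cast at h1
          linarith
        exact_mod_cast h2
      have hdk : k ∣ k ^ m := dvd_pow_self k hm.ne'
      have hcop1 : Nat.Coprime k (k ^ m - 1) := by
        have ha := (Nat.gcd_dvd_left k (k ^ m - 1)).trans hdk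
        have hbd := Nat.gcd_dvd_right k (k ^ m - 1)
        have hone := Nat.dvd_sub ha hbd
        rw [Nat.sub_sub_self hbk] at hone
        exact Nat.dvd_one.mp hone
      have hcop : Nat.Coprime (k ^ nu) (k ^ m - 1) := Nat.Coprime.pow_left _ hcop1
      have hdvd : k ^ nu ∣ valk k u := by
        apply hcop.dvd_of_dvd_mul_right
        rw [hUc]
        exact dvd_mul_left _ _
      have h3 := Nat.le_of_dvd (Nat.pos_of_ne_zero hu0) hdvd
      have h4 : valk k u < k ^ nu := by rw [hnudef]; exact valk_lt k u hu
      omega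
    have hBn0 : B.natAbs ≠ 0 := Int.natAbs_ne_zero.mpr hBne
    refine ⟨(k ^ m - 1) * valk k (w ++ u) * B.natAbs, ?_, fun p hp => ?_⟩
    · have : (k ^ m - 1) * valk k (w ++ u) * B.natAbs ≠ 0 :=
        mul_ne_zero (mul_ne_zero (by omega) hN0ne) hBn0
      omega
    haveI := Fact.mk hp
    have hD0 : (k ^ m - 1) * valk k (w ++ u) * B.natAbs ≠ 0 :=
      mul_ne_zero (mul_ne_zero (by omega) hN0ne) hBn0
    by_cases hpb : p ∣ k
    · -- p divides k
      refine ⟨padicValNat p B.natAbs + 1, Nat.succ_pos _, fun l hl hQl => ?_⟩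
      set t := padicValNat p B.natAbs with ht
      have hlt : t + 1 ≤ l := Nat.le_of_dvd hl hQl
      have hnot : ¬ p ^ (t + 1) ∣ valk k (w ++ wpow v l ++ u) := by
        intro hdvd
        have h1 : (p : ℤ) ^ (t + 1) ∣ (valk k (w ++ wpow v l ++ u) : ℤ) := by
          exact_mod_cast hdvd
        have h2 := h1.mul_left c
        have h4 : p ^ (t + 1) ∣ (k ^ m) ^ l := by
          have h5 : p ^ (m * l) ∣ k ^ (m * l) := pow_dvd_pow_of_dvd hpb _
          have h6 : t + 1 ≤ m * l := le_trans hlt (Nat.le_mul_of_pos_left l hm)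
          have h5' : p ^ (m * l) ∣ (k ^ m) ^ l := by rw [← pow_mul]; exact h5
          exact (pow_dvd_pow p h6).trans h5'
        have h3 : (p : ℤ) ^ (t + 1) ∣ A * ((k : ℤ) ^ m) ^ l := by
          have h7 : ((p ^ (t + 1) : ℕ) : ℤ) ∣ (((k ^ m) ^ l : ℕ) : ℤ) :=
            Int.natCast_dvd_natCast.mpr h4
          push_cast at h7
          exact h7.mul_left A
        have h5 : (p : ℤ) ^ (t + 1) ∣ B := by
          have h8 := dvd_sub h2 h3
          rwa [hkey l, add_sub_cancel_left] at h8
        have h6 : p ^ (t + 1) ∣ B.natAbs := by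
          have h9 : ((p ^ (t + 1) : ℕ) : ℤ) ∣ B := by exact_mod_cast h5
          have h10 := Int.natAbs_dvd_natAbs.mpr h9
          rwa [Int.natAbs_natCast] at h10
        exact pow_succ_padicValNat_not_dvd hBn0 h6
      have hle := padic_le_of_not_dvd hnot
      have h7 : padicValNat p B.natAbs ≤
          padicValNat p ((k ^ m - 1) * valk k (w ++ u) * B.natAbs) :=
        padic_le_of_dvd hp hD0 (dvd_mul_left _ _)
      omega
    · -- p does not divide k
      set ν := padicValNat p ((k ^ m - 1) * valk k (w ++ u)) with hν
      have hppos : 0 < p ^ (ν + 1) := pow_pos hp.pos _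
      refine ⟨(p ^ (ν + 1)).totient, Nat.totient_pos.mpr hppos, fun l hl hQl => ?_⟩
      have hcop : Nat.Coprime (k ^ m) (p ^ (ν + 1)) :=
        Nat.Coprime.pow _ _ (((Nat.Prime.coprime_iff_not_dvd hp).mpr hpb).symm)
      obtain ⟨j, rfl⟩ := hQl
      set Q := (p ^ (ν + 1)).totient with hQ
      have hmod : (k ^ m) ^ (Q * j) ≡ 1 [MOD p ^ (ν + 1)] := by
        have h1 := Nat.ModEq.pow_totient hcop
        have h2 : ((k ^ m) ^ Q) ^ j ≡ 1 ^ j [MOD p ^ (ν + 1)] := h1.pow j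
        rw [← pow_mul, one_pow] at h2
        exact h2
      have hdvdint : (p : ℤ) ^ (ν + 1) ∣ ((k : ℤ) ^ m) ^ (Q * j) - 1 := by
        have h1 := (hmod.symm).dvd
        have h2 : ((p ^ (ν + 1) : ℕ) : ℤ) ∣ (((k ^ m) ^ (Q * j) : ℕ) : ℤ) - ((1 : ℕ) : ℤ) := by
          exact_mod_cast h1
        push_cast at h2
        exact h2
      have hnot : ¬ p ^ (ν + 1) ∣ valk k (w ++ wpow v (Q * j) ++ u) := by
        intro hdvd
        have h1 : (p : ℤ) ^ (ν + 1) ∣ c * (valk k (w ++ wpow v (Q * j) ++ u) : ℤ) := by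
          have : (p : ℤ) ^ (ν + 1) ∣ (valk k (w ++ wpow v (Q * j) ++ u) : ℤ) := by
            exact_mod_cast hdvd
          exact this.mul_left c
        have h2 : (p : ℤ) ^ (ν + 1) ∣ A * (((k : ℤ) ^ m) ^ (Q * j) - 1) :=
          hdvdint.mul_left A
        have heq : c * (valk k (w ++ wpow v (Q * j) ++ u) : ℤ) -
            A * (((k : ℤ) ^ m) ^ (Q * j) - 1) = c * (valk k (w ++ u) : ℤ) := by
          linear_combination hkey (Q * j) - hkey0
        have h3 : (p : ℤ) ^ (ν + 1) ∣ c * (valk k (w ++ u) : ℤ) := heq ▸ dvd_sub h1 h2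
        have h4 : p ^ (ν + 1) ∣ (k ^ m - 1) * valk k (w ++ u) := by
          have hcast : (((k ^ m - 1) * valk k (w ++ u) : ℕ) : ℤ) =
              c * (valk k (w ++ u) : ℤ) := by
            push_cast [hccast]
            ring
          have h5 : ((p ^ (ν + 1) : ℕ) : ℤ) ∣ (((k ^ m - 1) * valk k (w ++ u) : ℕ) : ℤ) := by
            rw [hcast]; exact_mod_cast h3
          exact_mod_cast h5
        exact pow_succ_padicValNat_not_dvd (mul_ne_zero (by omega) hN0ne) h4
      have hle := padic_le_of_not_dvd hnot
      have h7 : ν ≤ padicValNat p ((k ^ m - 1) * valk k (w ++ u) * B.natAbs) :=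
        padic_le_of_dvd hp hD0 (dvd_mul_right _ _)
      omega


end MultAuto
end

section
/- Let k ≥ 2 be an integer and let A = (S, s₀, δ, τ) be a finite automaton over the alphabet Σ_k. Then there exists a threshold p₃ such that for every prime p > p₃ there exist n₁, n₂ ∈ ℕ₀ with n₁ ≢ n₂ (mod p) such that n₁ ∼ n₂ and p·n₁ ∼ p·n₂, where ∼ is the equivalence on ℕ₀ induced by the transition functions of A. -/
open scoped BigOperators

namespace MultAuto

lemma deltaW_append {S : Type*} (δ : ℕ → S → S) (u v : List ℕ) :
    deltaW δ (u ++ v) = deltaW δ u ∘ deltaW δ v := by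
  induction u with
  | nil => rfl
  | cons d t ih => simp [deltaW, ih, Function.comp_assoc]

lemma deltaW_replicate_zero {S : Type*} (δ : ℕ → S → S) (t : ℕ) :
    deltaW δ (List.replicate t 0) = (δ 0)^[t] := by
  induction t with
  | zero => rfl
  | succ t ih => rw [List.replicate_succ, Function.iterate_succ']; simp [deltaW, ih]

lemma padk_succ (k l n : ℕ) : padk k (l + 1) n = (n / k ^ l % k) :: padk k l n := by
  simp [padk, List.range_succ]

lemma padk_mul_pow_self (k : ℕ) (hk : 0 < k) (c : ℕ) :
    ∀ n, padk k c (n * k ^ c) = List.replicate c 0 := by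
  induction c with
  | zero => intro n; rfl
  | succ c ih =>
      intro n
      have h1 : n * k ^ (c + 1) = (n * k) * k ^ c := by ring
      have h2 : n * k ^ (c + 1) / k ^ c = n * k := by
        rw [h1, Nat.mul_div_cancel _ (pow_pos hk c)]
      rw [padk_succ, h2, h1, ih (n * k), Nat.mul_mod_left, List.replicate_succ]

lemma padk_mul_pow (k : ℕ) (hk : 0 < k) (c : ℕ) (n : ℕ) :
    ∀ l, padk k (l + c) (n * k ^ c) = padk k l n ++ List.replicate c 0 := by
  intro l
  induction l with
  | zero => simpa [padk] using padk_mul_pow_self k hk c n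
  | succ l ih =>
      have h0 : l + 1 + c = (l + c) + 1 := by ring
      have h2 : n * k ^ c / k ^ (l + c) = n / k ^ l := by
        rw [pow_add, mul_comm (k ^ l), ← Nat.div_div_eq_div_mul,
          Nat.mul_div_cancel _ (pow_pos hk c)]
      rw [h0, padk_succ, h2, ih, padk_succ, List.cons_append]

lemma padk_pad (k l n : ℕ) (hk : 0 < k) (hn : n < k ^ l) :
    ∀ t, padk k (l + t) n = List.replicate t 0 ++ padk k l n := by
  intro t
  induction t with
  | zero => rfl
  | succ t ih =>
      have h0 : l + (t + 1) = (l + t) + 1 := by ring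
      have h2 : n / k ^ (l + t) = 0 := by
        apply Nat.div_eq_of_lt
        exact lt_of_lt_of_le hn (Nat.pow_le_pow_right hk (by omega))
      rw [h0, padk_succ, h2, Nat.zero_mod, List.replicate_succ, List.cons_append, ih]

lemma eqvN_mul_pow (k : ℕ) (hk : 2 ≤ k) {S : Type*} (δ : ℕ → S → S) (e : ℕ)
    (he : 1 ≤ e) (hP : ∀ s, e ≤ s → (δ 0)^[s + e] = (δ 0)^[s]) (m : ℕ) :
    EqvN k δ (m * k ^ e) (m * k ^ (2 * e)) := by
  have hkm : m < k ^ m := Nat.lt_pow_self (by omega : 1 < k)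
  refine ⟨m + 3 * e, fun l hl => ?_⟩
  obtain ⟨t, h1, hte⟩ : ∃ t, l = (m + t) + e ∧ 2 * e ≤ t :=
    ⟨l - m - e, by omega, by omega⟩
  have h2 : l = (m + (t - e)) + 2 * e := by omega
  have e1 : padk k l (m * k ^ e)
      = (List.replicate t 0 ++ padk k m m) ++ List.replicate e 0 := by
    rw [h1, padk_mul_pow k (by omega) e m (m + t), padk_pad k m m (by omega) hkm t]
  have e2 : padk k l (m * k ^ (2 * e))
      = (List.replicate (t - e) 0 ++ padk k m m) ++ List.replicate (2 * e) 0 := by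
    rw [h2, padk_mul_pow k (by omega) (2 * e) m (m + (t - e)),
      padk_pad k m m (by omega) hkm (t - e)]
  rw [e1, e2, deltaW_append, deltaW_append, deltaW_append, deltaW_append,
    deltaW_replicate_zero, deltaW_replicate_zero, deltaW_replicate_zero,
    deltaW_replicate_zero]
  have hg1 : (δ 0)^[t] = (δ 0)^[t - e] := by
    have h := hP (t - e) (by omega)
    have h' : t - e + e = t := by omega
    rw [h'] at h
    exact h
  have hg2 : (δ 0)^[2 * e] = (δ 0)^[e] := by
    have h := hP e le_rfl
    have h' : e + e = 2 * e := by omega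
    rw [h'] at h
    exact h
  rw [hg1, hg2]

/-- for every sufficiently large prime `p` there are `n₁ ≢ n₂ (mod p)`
with `n₁ ∼ n₂` and `p n₁ ∼ p n₂` for the equivalence induced by the automaton. -/
theorem stmt13 (k : ℕ) (hk : 2 ≤ k) (S : Type) [Fintype S] (s₀ : S)
    (δ : ℕ → S → S) (τ : S → ℂ) :
    ∃ p₃ : ℕ, ∀ p : ℕ, p.Prime → p₃ < p →
      ∃ n₁ n₂ : ℕ, ¬ n₁ ≡ n₂ [MOD p] ∧
        EqvN k δ n₁ n₂ ∧ EqvN k δ (p * n₁) (p * n₂) := by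
  classical
  -- find an eventual period for iterates of `δ 0`
  obtain ⟨x, y, hxy, hfxy⟩ :=
    Finite.exists_ne_map_eq_of_infinite (fun n : ℕ => (δ 0)^[n])
  -- wlog i < j
  obtain ⟨i, j, hij, hgij⟩ : ∃ i j : ℕ, i < j ∧ (δ 0)^[i] = (δ 0)^[j] := by
    rcases lt_or_gt_of_ne hxy with h | h
    · exact ⟨x, y, h, hfxy⟩
    · exact ⟨y, x, h, hfxy.symm⟩
  set d := j - i with hd
  have hd1 : 1 ≤ d := by omega
  have hstep : ∀ s, i ≤ s → (δ 0)^[s + d] = (δ 0)^[s] := by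
    intro s hs
    have h1 : s + d = (s - i) + j := by omega
    have h2 : s = (s - i) + i := by omega
    rw [h1, Function.iterate_add, ← hgij, ← Function.iterate_add, ← h2]
  have hmul : ∀ c s, i ≤ s → (δ 0)^[s + c * d] = (δ 0)^[s] := by
    intro c
    induction c with
    | zero => simp
    | succ c ih =>
        intro s hs
        have h1 : s + (c + 1) * d = (s + c * d) + d := by ring
        rw [h1, hstep (s + c * d) (by omega), ih s hs]
  set e := (i + 1) * d with he
  have he1 : 1 ≤ e := by
    have : i + 1 ≤ (i + 1) * d := Nat.le_mul_of_pos_right _ hd1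
    omega
  have hei : i ≤ e := by
    have : i + 1 ≤ (i + 1) * d := Nat.le_mul_of_pos_right _ hd1
    omega
  have hP : ∀ s, e ≤ s → (δ 0)^[s + e] = (δ 0)^[s] := fun s hs =>
    hmul (i + 1) s (by omega)
  refine ⟨k ^ e, fun p hp hpk => ⟨k ^ e, k ^ (2 * e), ?_, ?_, ?_⟩⟩
  · -- non-congruence mod p
    intro hcong
    have hle : k ^ e ≤ k ^ (2 * e) := Nat.pow_le_pow_right (by omega) (by omega)
    have hdvd : p ∣ k ^ (2 * e) - k ^ e := (Nat.modEq_iff_dvd' hle).mp hcong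
    have hfact : k ^ (2 * e) - k ^ e = k ^ e * (k ^ e - 1) := by
      have h2 : k ^ (2 * e) = k ^ e * k ^ e := by rw [← pow_add]; ring_nf
      rw [h2, Nat.mul_sub, mul_one]
    rw [hfact] at hdvd
    rcases (Nat.Prime.dvd_mul hp).mp hdvd with h | h
    · have : p ≤ k ^ e := Nat.le_of_dvd (pow_pos (by omega) e) h
      omega
    · have hpos : 0 < k ^ e - 1 := by
        have : 2 ≤ k ^ e := le_trans (by omega : 2 ≤ k) (Nat.le_self_pow (by omega) k)
        omega
      have : p ≤ k ^ e - 1 := Nat.le_of_dvd hpos h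
      omega
  · have := eqvN_mul_pow k hk δ e he1 hP 1
    simpa using this
  · exact eqvN_mul_pow k hk δ e he1 hP p

end MultAuto
end
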